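/- Assuming the Hardy–Littlewood conjecture in the form ∑_{n≤x} ∏_{h∈H} 1_ℙ(n+h) = 𝔖(H)∫₂ˣ du/(log u)^{|H|} + O(x^{1/2+ε}) for all finite H ⊆ ℤ, the equivalent 'modified' form holds: ∑_{n≤x} ∏_{h∈H} (1_ℙ(n+h) - 1/log n) = 𝔖₀(H)∫₂ˣ du/(log u)^{|H|} + O_H(x^{1/2+ε}), where 𝔖₀(H) = ∑_{T⊆H}(-1)^{|H∖T|}𝔖(T). -/

import Mathlib

section AuxStmt19
open MeasureTheory intervalIntegral Set

open MeasureTheory intervalIntegral Set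

/-- integrand of the logarithmic integral -/
noncomputable def gfun (M : ℕ) (u : ℝ) : ℝ := 1 / (Real.log u) ^ M

/-- the logarithmic integral -/
noncomputable def Jf (M : ℕ) (y : ℝ) : ℝ := ∫ u in (2:ℝ)..y, gfun M u

lemma gfun_contOn (M : ℕ) : ContinuousOn (gfun M) (Set.Ioi 1) := by
  refine continuousOn_const.div ((Real.continuousOn_log.mono ?_).pow M) ?_
  · intro u hu
    simp only [Set.mem_compl_iff, Set.mem_singleton_iff]
    intro h; rw [h] at hu; exact absurd hu (by norm_num)
  · intro u hu
    exact pow_ne_zero _ (ne_of_gt (Real.log_pos hu))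

lemma gfun_intInt (M : ℕ) {a b : ℝ} (ha : 1 < a) (hb : 1 < b) :
    IntervalIntegrable (gfun M) volume a b := by
  refine ((gfun_contOn M).mono ?_).intervalIntegrable
  intro u hu
  exact lt_of_lt_of_le (lt_min ha hb) hu.1

lemma hasDerivAt_Jf (M : ℕ) {t : ℝ} (ht : 1 < t) : HasDerivAt (Jf M) (gfun M t) t :=
  intervalIntegral.integral_hasDerivAt_right (gfun_intInt M (by norm_num) ht)
    ((gfun_contOn M).stronglyMeasurableAtFilter isOpen_Ioi t ht)
    ((gfun_contOn M).continuousAt (Ioi_mem_nhds ht))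

lemma gfun_bound (M : ℕ) {u : ℝ} (hu : 3/2 ≤ u) :
    |gfun M u| ≤ (Real.log (3/2))⁻¹ ^ M := by
  have hL : 0 < Real.log (3/2) := Real.log_pos (by norm_num)
  have hlu : Real.log (3/2) ≤ Real.log u := Real.log_le_log (by norm_num) hu
  have h1 : 0 < Real.log u := lt_of_lt_of_le hL hlu
  rw [gfun, abs_of_nonneg (by positivity), one_div, ← inv_pow]
  gcongr


lemma Jf_diff_bound (M : ℕ) {a b : ℝ} (ha : 3/2 ≤ a) (hb : 3/2 ≤ b) :
    |Jf M b - Jf M a| ≤ (Real.log (3/2))⁻¹ ^ M * |b - a| := by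
  have h1 : (1:ℝ) < a := lt_of_lt_of_le (by norm_num) ha
  have h2 : (1:ℝ) < b := lt_of_lt_of_le (by norm_num) hb
  have : Jf M b - Jf M a = ∫ u in a..b, gfun M u :=
    intervalIntegral.integral_interval_sub_left (gfun_intInt M (by norm_num) h2)
      (gfun_intInt M (by norm_num) h1)
  rw [this]
  refine intervalIntegral.norm_integral_le_of_norm_le_const (f := gfun M) (E := ℝ) ?_
  intro u hu
  rw [Set.uIoc] at hu
  have h3 : (3:ℝ)/2 ≤ u := le_of_lt (lt_of_le_of_lt (le_min ha hb) hu.1)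
  exact gfun_bound M h3

lemma onediv_log_pow_bound (k : ℕ) {t : ℝ} (ht : 3/2 ≤ t) :
    |(1 / Real.log t) ^ k| ≤ (Real.log (3/2))⁻¹ ^ k := by
  have hL : 0 < Real.log (3/2) := Real.log_pos (by norm_num)
  have hlu : Real.log (3/2) ≤ Real.log t := Real.log_le_log (by norm_num) ht
  have h1 : 0 < Real.log t := lt_of_lt_of_le hL hlu
  rw [abs_of_nonneg (by positivity), one_div]
  gcongr

lemma hasDerivAt_flog (k : ℕ) {t : ℝ} (ht : 1 < t) :
    HasDerivAt (fun y : ℝ => (1 / Real.log y) ^ k)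
      (-(k:ℝ) * (1 / Real.log t) ^ (k+1) * t⁻¹) t := by
  have h0 : Real.log t ≠ 0 := ne_of_gt (Real.log_pos ht)
  have ht0 : t ≠ 0 := by positivity
  have hlog := Real.hasDerivAt_log ht0
  have h1 : HasDerivAt (fun y : ℝ => 1 / Real.log y) (-(t⁻¹) / (Real.log t) ^ 2) t := by
    simpa [one_div] using hlog.fun_inv h0
  have h2 : HasDerivAt (fun y : ℝ => (1 / Real.log y) ^ k)
      (↑k * (1 / Real.log t) ^ (k - 1) * (-t⁻¹ / Real.log t ^ 2)) t := h1.fun_pow k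
  convert h2 using 1
  rcases Nat.eq_zero_or_pos k with hk | hk
  · subst hk; simp
  · simp only [one_div]
    rw [show k + 1 = (k-1) + 2 by omega, pow_add]
    ring

noncomputable def ffn (k : ℕ) (t : ℝ) : ℝ := (1 / Real.log t) ^ k
noncomputable def ffn' (k : ℕ) (t : ℝ) : ℝ := -(k:ℝ) * (1 / Real.log t) ^ (k+1) * t⁻¹

lemma hasDerivAt_ffn (k : ℕ) {t : ℝ} (ht : 1 < t) : HasDerivAt (ffn k) (ffn' k t) t :=
  hasDerivAt_flog k ht

lemma ffn_contOn (k : ℕ) : ContinuousOn (ffn k) (Set.Ioi 1) :=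
  fun t ht => ((hasDerivAt_ffn k ht).continuousAt).continuousWithinAt

lemma Jf_contOn (M : ℕ) : ContinuousOn (Jf M) (Set.Ioi 1) :=
  fun t ht => ((hasDerivAt_Jf M ht).continuousAt).continuousWithinAt

lemma ffn'_contOn (k : ℕ) : ContinuousOn (ffn' k) (Set.Ioi 1) := by
  refine (continuousOn_const.mul (ffn_contOn (k+1))).mul ?_
  exact continuousOn_id.inv₀ (fun t ht => ne_of_gt (lt_trans one_pos ht))

lemma ffn_bound (k : ℕ) {t : ℝ} (ht : 3/2 ≤ t) : |ffn k t| ≤ (Real.log (3/2))⁻¹ ^ k :=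
  onediv_log_pow_bound k ht

lemma ffn'_bound (k : ℕ) {t : ℝ} (ht : 3/2 ≤ t) :
    |ffn' k t| ≤ (k:ℝ) * (Real.log (3/2))⁻¹ ^ (k+1) * t⁻¹ := by
  have ht0 : 0 < t := by linarith
  rw [ffn', abs_mul, abs_mul, abs_neg, abs_of_nonneg (Nat.cast_nonneg k),
    abs_of_nonneg (le_of_lt (inv_pos.mpr ht0))]
  gcongr
  exact onediv_log_pow_bound (k+1) ht

lemma ffn_mul_gfun (k m : ℕ) (t : ℝ) : ffn k t * gfun m t = gfun (m+k) t := by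
  rw [ffn, gfun, gfun, div_pow, one_pow, div_mul_div_comm, one_mul, ← pow_add, add_comm k m]

set_option maxHeartbeats 1000000 in
lemma keyStep (c : ℕ → ℝ) (hc0 : c 0 = 0) (hc1 : c 1 = 0) (hcb : ∀ n, |c n| ≤ 1)
    (σ : ℝ) (m : ℕ) (ε : ℝ) (hε : 0 < ε) (C₀ : ℝ) (hC₀ : 0 ≤ C₀)
    (hHL : ∀ x : ℕ, 3 ≤ x →
      |(∑ n ∈ Finset.Icc 0 x, c n) - σ * Jf m x| ≤ C₀ * (x:ℝ) ^ ((1:ℝ)/2 + ε))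
    (k : ℕ) :
    ∃ C : ℝ, 0 < C ∧ ∀ x : ℕ, 3 ≤ x →
      |(∑ n ∈ Finset.Icc 0 x, c n * ffn k n) - σ * Jf (m+k) x| ≤
        C * (x:ℝ) ^ ((1:ℝ)/2 + ε) := by
  have he0 : 0 < (1:ℝ)/2 + ε := by linarith
  have he : (1:ℝ)/2 ≤ (1:ℝ)/2 + ε := by linarith
  set e := (1:ℝ)/2 + ε with he_def
  have hL : 0 < Real.log (3/2) := Real.log_pos (by norm_num)
  set L := Real.log (3/2) with hL_def
  set C₁ := C₀ + |σ| * L⁻¹ ^ m + 1 with hC₁_def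
  have hC₁ : 0 ≤ C₁ := by
    have h1 : (0:ℝ) ≤ |σ| * L⁻¹ ^ m := by positivity
    simp only [hC₁_def]; linarith
  set C₂ := (k:ℝ) * L⁻¹ ^ (k+1) * C₁ with hC₂_def
  have hC₂ : 0 ≤ C₂ := mul_nonneg (by positivity) hC₁
  set Kc := ffn k (3/2) * Jf m (3/2) - Jf (m+k) (3/2) with hKc_def
  refine ⟨L⁻¹ ^ k * C₀ + |σ| * |Kc| + 2 * C₂ + 1, ?_, ?_⟩
  · have h1 : (0:ℝ) ≤ L⁻¹ ^ k * C₀ := mul_nonneg (by positivity) hC₀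
    have h2 : (0:ℝ) ≤ |σ| * |Kc| := by positivity
    linarith
  intro x hx
  have hx3 : (3:ℝ) ≤ (x:ℝ) := by exact_mod_cast hx
  have hx32 : (3:ℝ)/2 ≤ (x:ℝ) := by linarith
  have hx1 : (1:ℝ) < (x:ℝ) := by linarith
  have hxe1 : 1 ≤ (x:ℝ) ^ e := by
    rw [← Real.one_rpow e]
    exact Real.rpow_le_rpow (by norm_num) (by linarith) he0.le
  have hxe0 : 0 ≤ (x:ℝ) ^ e := by positivity
  have hIccIoi : Set.Icc (3/2:ℝ) (x:ℝ) ⊆ Set.Ioi 1 := fun t ht => by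
    have := ht.1; simp only [Set.mem_Ioi]; linarith
  have hIocIcc : Set.Ioc (3/2:ℝ) (x:ℝ) ⊆ Set.Icc (3/2:ℝ) (x:ℝ) := Set.Ioc_subset_Icc_self
  -- Abel summation
  have hfd : ∀ t ∈ Set.Icc (3/2:ℝ) (x:ℝ), DifferentiableAt ℝ (ffn k) t :=
    fun t ht => (hasDerivAt_ffn k (hIccIoi ht)).differentiableAt
  have hderiv_eq : Set.EqOn (deriv (ffn k)) (ffn' k) (Set.Icc (3/2:ℝ) (x:ℝ)) :=
    fun t ht => (hasDerivAt_ffn k (hIccIoi ht)).deriv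
  have hf'cont : ContinuousOn (ffn' k) (Set.Icc (3/2:ℝ) (x:ℝ)) := (ffn'_contOn k).mono hIccIoi
  have hfint : IntegrableOn (deriv (ffn k)) (Set.Icc (3/2:ℝ) (x:ℝ)) :=
    (hf'cont.integrableOn_Icc).congr_fun hderiv_eq.symm measurableSet_Icc
  have habel := sum_mul_eq_sub_sub_integral_mul c (by norm_num : (0:ℝ) ≤ 3/2) hx32 hfd hfint
  rw [show ⌊(3/2:ℝ)⌋₊ = 1 by rw [Nat.floor_eq_iff (by norm_num)]; norm_num,
    Nat.floor_natCast] at habel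
  have hS1 : ∑ n ∈ Finset.Icc 0 1, c n = 0 := by
    rw [show Finset.Icc 0 1 = ({0, 1} : Finset ℕ) by decide]
    rw [Finset.sum_insert (by decide), Finset.sum_singleton, hc0, hc1]; ring
  have hsum_eq : ∑ n ∈ Finset.Icc 0 x, c n * ffn k n = ∑ n ∈ Finset.Ioc 1 x, ffn k n * c n := by
    rw [show Finset.Icc 0 x = insert 0 (insert 1 (Finset.Ioc 1 x)) by
      ext n; simp only [Finset.mem_Icc, Finset.mem_insert, Finset.mem_Ioc]; omega]
    rw [Finset.sum_insert (by simp), Finset.sum_insert (by simp)]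
    simp only [hc0, hc1, zero_mul, mul_zero, zero_add]
    exact Finset.sum_congr rfl fun n _ => mul_comm _ _
  -- FTC computation of the main integral
  have hmem : ∀ t ∈ Set.uIcc (3/2:ℝ) (x:ℝ), (1:ℝ) < t := by
    rw [Set.uIcc_of_le hx32]; intro t ht; have := ht.1; linarith
  have hsubu : Set.uIcc (3/2:ℝ) (x:ℝ) ⊆ Set.Ioi 1 := fun t ht => hmem t ht
  have hint1 : IntervalIntegrable (fun t => ffn' k t * Jf m t) volume (3/2:ℝ) (x:ℝ) :=
    (((ffn'_contOn k).mono hsubu).mul ((Jf_contOn m).mono hsubu)).intervalIntegrable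
  have hint2 : IntervalIntegrable (fun t => ffn k t * gfun m t) volume (3/2:ℝ) (x:ℝ) :=
    (((ffn_contOn k).mono hsubu).mul ((gfun_contOn m).mono hsubu)).intervalIntegrable
  have hFTC : ∫ t in (3/2:ℝ)..(x:ℝ), (ffn' k t * Jf m t + ffn k t * gfun m t)
      = ffn k x * Jf m x - ffn k (3/2) * Jf m (3/2) := by
    refine intervalIntegral.integral_eq_sub_of_hasDerivAt
      (f := fun y => ffn k y * Jf m y) (fun t ht => ?_) (hint1.add hint2)
    exact (hasDerivAt_ffn k (hmem t ht)).mul (hasDerivAt_Jf m (hmem t ht))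
  have hsplit : ∫ t in (3/2:ℝ)..(x:ℝ), (ffn' k t * Jf m t + ffn k t * gfun m t)
      = (∫ t in (3/2:ℝ)..(x:ℝ), ffn' k t * Jf m t) + ∫ t in (3/2:ℝ)..(x:ℝ), gfun (m+k) t := by
    rw [intervalIntegral.integral_add hint1 hint2]
    congr 1
    exact intervalIntegral.integral_congr (fun t _ => ffn_mul_gfun k m t)
  have hJsplit : ∫ t in (3/2:ℝ)..(x:ℝ), gfun (m+k) t = Jf (m+k) x - Jf (m+k) (3/2) :=
    (intervalIntegral.integral_interval_sub_left (gfun_intInt (m+k) (by norm_num) hx1)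
      (gfun_intInt (m+k) (by norm_num) (by norm_num))).symm
  have E4 : ∫ t in (3/2:ℝ)..(x:ℝ), ffn' k t * Jf m t
      = ffn k x * Jf m x - ffn k (3/2) * Jf m (3/2) - Jf (m+k) x + Jf (m+k) (3/2) := by
    linarith [hFTC, hsplit, hJsplit]
  -- the error function bound
  have hR : ∀ t ∈ Set.Ioc (3/2:ℝ) (x:ℝ),
      |(∑ n ∈ Finset.Icc 0 ⌊t⌋₊, c n) - σ * Jf m t| ≤ C₁ * t ^ e := by
    intro t ht
    have ht32 : (3:ℝ)/2 ≤ t := ht.1.le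
    have ht0 : 0 ≤ t := by linarith
    have hte1 : 1 ≤ t ^ e := by
      rw [← Real.one_rpow e]
      exact Real.rpow_le_rpow (by norm_num) (by linarith) he0.le
    have hte0 : 0 ≤ t ^ e := by positivity
    have hσL : (0:ℝ) ≤ |σ| * L⁻¹ ^ m := by positivity
    rcases le_or_gt 3 t with h3 | h3
    · have hN3 : 3 ≤ ⌊t⌋₊ := Nat.le_floor (by exact_mod_cast h3)
      have hfl_le : (⌊t⌋₊:ℝ) ≤ t := Nat.floor_le ht0
      have hfl_ge : t ≤ (⌊t⌋₊:ℝ) + 1 := (Nat.lt_floor_add_one t).le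
      have h32N : (3:ℝ)/2 ≤ (⌊t⌋₊:ℝ) := by
        have : (3:ℝ) ≤ (⌊t⌋₊:ℝ) := by exact_mod_cast hN3
        linarith
      have h1 := hHL ⌊t⌋₊ hN3
      have h2 : |Jf m ⌊t⌋₊ - Jf m t| ≤ L⁻¹ ^ m * 1 := by
        refine le_trans (Jf_diff_bound m ht32 h32N) ?_
        gcongr
        rw [abs_of_nonpos (by linarith)]
        linarith
      have h3' : C₀ * (⌊t⌋₊:ℝ) ^ e ≤ C₀ * t ^ e := by gcongr
      calc |(∑ n ∈ Finset.Icc 0 ⌊t⌋₊, c n) - σ * Jf m t|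
          ≤ |(∑ n ∈ Finset.Icc 0 ⌊t⌋₊, c n) - σ * Jf m ⌊t⌋₊| + |σ| * |Jf m ⌊t⌋₊ - Jf m t| := by
            rw [← abs_mul σ]
            have := abs_add_le ((∑ n ∈ Finset.Icc 0 ⌊t⌋₊, c n) - σ * Jf m ⌊t⌋₊)
              (σ * (Jf m ⌊t⌋₊ - Jf m t))
            calc |(∑ n ∈ Finset.Icc 0 ⌊t⌋₊, c n) - σ * Jf m t|
                = |((∑ n ∈ Finset.Icc 0 ⌊t⌋₊, c n) - σ * Jf m ⌊t⌋₊)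
                    + σ * (Jf m ⌊t⌋₊ - Jf m t)| := by ring_nf
              _ ≤ _ := by rw [abs_mul] at this ⊢; exact this
        _ ≤ C₀ * t ^ e + |σ| * (L⁻¹ ^ m * 1) := by
            refine add_le_add (le_trans h1 h3') ?_
            gcongr
        _ ≤ C₁ * t ^ e := by
            have hh : |σ| * L⁻¹ ^ m ≤ |σ| * L⁻¹ ^ m * t ^ e := le_mul_of_one_le_right hσL hte1
            have expand : C₁ * t ^ e = C₀ * t ^ e + |σ| * L⁻¹ ^ m * t ^ e + t ^ e := by
              rw [hC₁_def]; ring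
            rw [expand, mul_one]
            linarith
    · have hNlt : ⌊t⌋₊ < 3 := by
        rw [Nat.floor_lt ht0]; exact_mod_cast h3
      have hN1 : 1 ≤ ⌊t⌋₊ := Nat.le_floor (by norm_num; linarith)
      have h1 : |∑ n ∈ Finset.Icc 0 ⌊t⌋₊, c n| ≤ 1 := by
        have : ⌊t⌋₊ = 1 ∨ ⌊t⌋₊ = 2 := by omega
        rcases this with h | h
        · rw [h, hS1]; norm_num
        · rw [h, show Finset.Icc 0 2 = ({0, 1, 2} : Finset ℕ) by decide]
          rw [Finset.sum_insert (by decide), Finset.sum_insert (by decide),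
            Finset.sum_singleton, hc0, hc1]
          simpa using hcb 2
      have h2 : |Jf m t| ≤ L⁻¹ ^ m := by
        have := Jf_diff_bound m (by norm_num : (3:ℝ)/2 ≤ 2) ht32
        rw [show Jf m 2 = 0 from intervalIntegral.integral_same, sub_zero] at this
        refine le_trans this ?_
        have habs : |t - 2| ≤ 1 := by rw [abs_le]; constructor <;> linarith
        calc L⁻¹ ^ m * |t - 2| ≤ L⁻¹ ^ m * 1 := by gcongr
          _ = L⁻¹ ^ m := mul_one _
      calc |(∑ n ∈ Finset.Icc 0 ⌊t⌋₊, c n) - σ * Jf m t|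
          ≤ |∑ n ∈ Finset.Icc 0 ⌊t⌋₊, c n| + |σ| * |Jf m t| := by
            refine le_trans (abs_sub _ _) ?_
            rw [abs_mul]
        _ ≤ 1 + |σ| * L⁻¹ ^ m := by gcongr
        _ ≤ C₁ * t ^ e := by
            have hh : |σ| * L⁻¹ ^ m ≤ |σ| * L⁻¹ ^ m * t ^ e := le_mul_of_one_le_right hσL hte1
            have hc0' : 0 ≤ C₀ * t ^ e := mul_nonneg hC₀ hte0
            have expand : C₁ * t ^ e = C₀ * t ^ e + |σ| * L⁻¹ ^ m * t ^ e + t ^ e := by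
              rw [hC₁_def]; ring
            rw [expand]
            linarith
  -- integrability facts
  have hf'IocInt : IntegrableOn (ffn' k) (Set.Ioc (3/2:ℝ) (x:ℝ)) volume :=
    (hf'cont.integrableOn_Icc).mono_set hIocIcc
  have hJIocInt : IntegrableOn (fun t => ffn' k t * Jf m t) (Set.Ioc (3/2:ℝ) (x:ℝ)) volume :=
    ((hf'cont.mul ((Jf_contOn m).mono hIccIoi)).integrableOn_Icc).mono_set hIocIcc
  have hEmeas : AEStronglyMeasurable
      (fun t : ℝ => (∑ n ∈ Finset.Icc 0 ⌊t⌋₊, c n) - σ * Jf m t)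
      (volume.restrict (Set.Ioc (3/2:ℝ) (x:ℝ))) := by
    refine AEStronglyMeasurable.sub ?_ ?_
    · have hfloorMeas : Measurable (fun t : ℝ => ⌊t⌋₊) := Nat.measurable_floor
      have : Measurable (fun t : ℝ => ∑ n ∈ Finset.Icc 0 ⌊t⌋₊, c n) :=
        (measurable_from_top (f := fun N : ℕ => ∑ n ∈ Finset.Icc 0 N, c n)).comp hfloorMeas
      exact this.aestronglyMeasurable
    · exact aestronglyMeasurable_const.mul
        ((((Jf_contOn m).mono hIccIoi).aestronglyMeasurable measurableSet_Icc).mono_measure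
          (Measure.restrict_mono hIocIcc le_rfl))
  have hEbdd : ∀ᵐ t ∂(volume.restrict (Set.Ioc (3/2:ℝ) (x:ℝ))),
      ‖(∑ n ∈ Finset.Icc 0 ⌊t⌋₊, c n) - σ * Jf m t‖ ≤ C₁ * (x:ℝ) ^ e := by
    rw [ae_restrict_iff' measurableSet_Ioc]
    refine MeasureTheory.ae_of_all _ (fun t ht => ?_)
    have h2 : t ^ e ≤ (x:ℝ) ^ e :=
      Real.rpow_le_rpow (by linarith [ht.1]) ht.2 he0.le
    rw [Real.norm_eq_abs]
    exact le_trans (hR t ht) (mul_le_mul_of_nonneg_left h2 hC₁)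
  have I1 : IntegrableOn
      (fun t : ℝ => ((∑ n ∈ Finset.Icc 0 ⌊t⌋₊, c n) - σ * Jf m t) * ffn' k t)
      (Set.Ioc (3/2:ℝ) (x:ℝ)) volume :=
    MeasureTheory.Integrable.bdd_mul hf'IocInt hEmeas hEbdd
  have hdecomp : (∫ t in Set.Ioc (3/2:ℝ) (x:ℝ),
        deriv (ffn k) t * (∑ n ∈ Finset.Icc 0 ⌊t⌋₊, c n))
      = σ * (∫ t in Set.Ioc (3/2:ℝ) (x:ℝ), ffn' k t * Jf m t)
        + ∫ t in Set.Ioc (3/2:ℝ) (x:ℝ),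
            ((∑ n ∈ Finset.Icc 0 ⌊t⌋₊, c n) - σ * Jf m t) * ffn' k t := by
    rw [← MeasureTheory.integral_const_mul, ← integral_add (hJIocInt.const_mul σ) I1]
    refine setIntegral_congr_fun measurableSet_Ioc (fun t ht => ?_)
    rw [hderiv_eq (hIocIcc ht)]
    ring
  -- error integral bound
  have hIE : |∫ t in Set.Ioc (3/2:ℝ) (x:ℝ),
      ((∑ n ∈ Finset.Icc 0 ⌊t⌋₊, c n) - σ * Jf m t) * ffn' k t| ≤ 2 * C₂ * (x:ℝ) ^ e := by
    have hmaj_cont : ContinuousOn (fun t : ℝ => C₂ * t ^ (e - 1)) (Set.Icc (3/2:ℝ) (x:ℝ)) := by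
      refine continuousOn_const.mul (fun t ht => ?_)
      exact (Real.continuousAt_rpow_const t (e-1)
        (Or.inl (by have := ht.1; intro h; rw [h] at this; norm_num at this))).continuousWithinAt
    have hmaj_int : IntegrableOn (fun t : ℝ => C₂ * t ^ (e-1)) (Set.Ioc (3/2:ℝ) (x:ℝ)) volume :=
      (hmaj_cont.integrableOn_Icc).mono_set hIocIcc
    have hb : ∀ᵐ t ∂(volume.restrict (Set.Ioc (3/2:ℝ) (x:ℝ))),
        ‖((∑ n ∈ Finset.Icc 0 ⌊t⌋₊, c n) - σ * Jf m t) * ffn' k t‖ ≤ C₂ * t ^ (e-1) := by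
      rw [ae_restrict_iff' measurableSet_Ioc]
      refine MeasureTheory.ae_of_all _ (fun t ht => ?_)
      have ht32 : (3:ℝ)/2 ≤ t := ht.1.le
      have ht0 : (0:ℝ) < t := by linarith
      rw [Real.norm_eq_abs, abs_mul]
      calc |(∑ n ∈ Finset.Icc 0 ⌊t⌋₊, c n) - σ * Jf m t| * |ffn' k t|
          ≤ (C₁ * t ^ e) * ((k:ℝ) * L⁻¹ ^ (k+1) * t⁻¹) :=
            mul_le_mul (hR t ht) (ffn'_bound k ht32) (abs_nonneg _)
              (mul_nonneg hC₁ (by positivity))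
        _ = C₂ * t ^ (e-1) := by
            have hts : t ^ (e-1) = t ^ e * t⁻¹ := by
              rw [Real.rpow_sub ht0, Real.rpow_one, div_eq_mul_inv]
            rw [hts, hC₂_def]; ring
    calc |∫ t in Set.Ioc (3/2:ℝ) (x:ℝ),
          ((∑ n ∈ Finset.Icc 0 ⌊t⌋₊, c n) - σ * Jf m t) * ffn' k t|
        ≤ ∫ t in Set.Ioc (3/2:ℝ) (x:ℝ), C₂ * t ^ (e-1) := by
          rw [← Real.norm_eq_abs]
          exact MeasureTheory.norm_integral_le_of_norm_le hmaj_int hb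
      _ = C₂ * ∫ t in (3/2:ℝ)..(x:ℝ), t ^ (e-1) := by
          rw [← intervalIntegral.integral_of_le hx32, intervalIntegral.integral_const_mul]
      _ ≤ 2 * C₂ * (x:ℝ) ^ e := by
          rw [integral_rpow (Or.inl (by linarith : (-1:ℝ) < e - 1)), sub_add_cancel]
          have h32e : (0:ℝ) ≤ (3/2:ℝ) ^ e := by positivity
          have hq : ((x:ℝ) ^ e - (3/2:ℝ) ^ e) / e ≤ 2 * (x:ℝ) ^ e := by
            rw [div_le_iff₀ he0]
            nlinarith
          calc C₂ * (((x:ℝ) ^ e - (3/2:ℝ) ^ e) / e) ≤ C₂ * (2 * (x:ℝ) ^ e) :=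
                mul_le_mul_of_nonneg_left hq hC₂
            _ = 2 * C₂ * (x:ℝ) ^ e := by ring
  -- final identity
  have hIJoc : (∫ t in Set.Ioc (3/2:ℝ) (x:ℝ), ffn' k t * Jf m t)
      = ∫ t in (3/2:ℝ)..(x:ℝ), ffn' k t * Jf m t :=
    (intervalIntegral.integral_of_le hx32).symm
  have hDeq : (∑ n ∈ Finset.Icc 0 x, c n * ffn k n) - σ * Jf (m+k) x
      = ffn k x * ((∑ n ∈ Finset.Icc 0 x, c n) - σ * Jf m x) + σ * Kc
        - ∫ t in Set.Ioc (3/2:ℝ) (x:ℝ),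
            ((∑ n ∈ Finset.Icc 0 ⌊t⌋₊, c n) - σ * Jf m t) * ffn' k t := by
    rw [hsum_eq, habel, hS1, hdecomp, hIJoc, E4, hKc_def]; ring
  rw [hDeq]
  calc |ffn k x * ((∑ n ∈ Finset.Icc 0 x, c n) - σ * Jf m x) + σ * Kc
        - ∫ t in Set.Ioc (3/2:ℝ) (x:ℝ),
            ((∑ n ∈ Finset.Icc 0 ⌊t⌋₊, c n) - σ * Jf m t) * ffn' k t|
      ≤ |ffn k x * ((∑ n ∈ Finset.Icc 0 x, c n) - σ * Jf m x)| + |σ * Kc|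
        + |∫ t in Set.Ioc (3/2:ℝ) (x:ℝ),
            ((∑ n ∈ Finset.Icc 0 ⌊t⌋₊, c n) - σ * Jf m t) * ffn' k t| :=
        le_trans (abs_sub _ _) (add_le_add_left (abs_add_le _ _) _)
    _ ≤ L⁻¹ ^ k * (C₀ * (x:ℝ) ^ e) + |σ| * |Kc| + 2 * C₂ * (x:ℝ) ^ e := by
        refine add_le_add (add_le_add ?_ ?_) hIE
        · rw [abs_mul]
          exact mul_le_mul (ffn_bound k hx32) (hHL x hx) (abs_nonneg _) (by positivity)
        · rw [abs_mul]
    _ ≤ (L⁻¹ ^ k * C₀ + |σ| * |Kc| + 2 * C₂ + 1) * (x:ℝ) ^ e := by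
        have h1 : |σ| * |Kc| ≤ |σ| * |Kc| * (x:ℝ) ^ e :=
          le_mul_of_one_le_right (by positivity) hxe1
        have expand : (L⁻¹ ^ k * C₀ + |σ| * |Kc| + 2 * C₂ + 1) * (x:ℝ) ^ e
            = L⁻¹ ^ k * (C₀ * (x:ℝ) ^ e) + |σ| * |Kc| * (x:ℝ) ^ e + 2 * C₂ * (x:ℝ) ^ e
              + (x:ℝ) ^ e := by ring
        rw [expand]
        linarith

end AuxStmt19

/-- The Hardy–Littlewood singular series
`𝔖(H) = ∏_p (1 - |H mod p|/p)(1 - 1/p)^{-|H|}`. -/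
noncomputable def singSeries (H : Finset ℤ) : ℝ :=
  ∏' p : Nat.Primes,
    (1 - ((H.image (fun t : ℤ => (t : ZMod (p : ℕ)))).card : ℝ) / (p : ℝ)) *
      ((1 - 1 / (p : ℝ)) ^ (-(H.card : ℤ)))

/-- The modified singular series `𝔖₀(H) = ∑_{T ⊆ H} (-1)^{|H∖T|} 𝔖(T)`. -/
noncomputable def singSeries₀ (H : Finset ℤ) : ℝ :=
  ∑ T ∈ H.powerset, (-1 : ℝ) ^ ((H \ T).card) * singSeries T

/-- The indicator function of the primes on `ℤ`. -/
def primeInd (m : ℤ) : ℝ := if m.toNat.Prime then 1 else 0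

/-- The Hardy–Littlewood conjecture implies its modified form:
if `∑_{n ≤ x} ∏_{h ∈ H} 1_ℙ(n+h) = 𝔖(H) ∫₂ˣ du/(log u)^{|H|} + O(x^{1/2+ε})` for all
finite `H ⊆ ℤ`, then
`∑_{n ≤ x} ∏_{h ∈ H} (1_ℙ(n+h) - 1/log n) = 𝔖₀(H) ∫₂ˣ du/(log u)^{|H|} + O_{H,ε}(x^{1/2+ε})`. -/
theorem stmt19
    (HL : ∀ H : Finset ℤ, ∀ ε : ℝ, 0 < ε → ∃ C : ℝ, 0 < C ∧ ∀ x : ℕ, 3 ≤ x →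
      |(∑ n ∈ Finset.Icc 2 x, ∏ h ∈ H, primeInd ((n : ℤ) + h)) -
          singSeries H * ∫ u in (2 : ℝ)..(x : ℝ), 1 / (Real.log u) ^ H.card| ≤
        C * (x : ℝ) ^ ((1 : ℝ) / 2 + ε)) :
    ∀ H : Finset ℤ, ∀ ε : ℝ, 0 < ε → ∃ C : ℝ, 0 < C ∧ ∀ x : ℕ, 3 ≤ x →
      |(∑ n ∈ Finset.Icc 2 x, ∏ h ∈ H, (primeInd ((n : ℤ) + h) - 1 / Real.log n)) -
          singSeries₀ H * ∫ u in (2 : ℝ)..(x : ℝ), 1 / (Real.log u) ^ H.card| ≤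
        C * (x : ℝ) ^ ((1 : ℝ) / 2 + ε) := by
  intro H ε hε
  classical
  have hT : ∀ T : Finset ℤ, T ⊆ H → ∃ C : ℝ, 0 < C ∧ ∀ x : ℕ, 3 ≤ x →
      |(∑ n ∈ Finset.Icc 2 x, (∏ h ∈ T, primeInd ((n:ℤ) + h))
            * (-(1 / Real.log n)) ^ (H \ T).card)
        - ((-1:ℝ) ^ (H \ T).card * singSeries T) * Jf H.card x| ≤
      C * (x:ℝ) ^ ((1:ℝ)/2 + ε) := by
    intro T hTH
    obtain ⟨C₀, hC₀pos, hC₀⟩ := HL T ε hε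
    set c : ℕ → ℝ := fun n => if 2 ≤ n then ∏ h ∈ T, primeInd ((n:ℤ) + h) else 0 with hc_def
    have hfilter : ∀ x : ℕ, (Finset.Icc 0 x).filter (fun n => 2 ≤ n) = Finset.Icc 2 x := by
      intro x; ext n
      simp only [Finset.mem_filter, Finset.mem_Icc]
      omega
    have hprod0 : ∀ n : ℕ, 0 ≤ ∏ h ∈ T, primeInd ((n:ℤ) + h) := fun n =>
      Finset.prod_nonneg (fun h _ => by unfold primeInd; split <;> norm_num)
    have hprod1 : ∀ n : ℕ, (∏ h ∈ T, primeInd ((n:ℤ) + h)) ≤ 1 := fun n =>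
      Finset.prod_le_one (fun h _ => by unfold primeInd; split <;> norm_num)
        (fun h _ => by unfold primeInd; split <;> norm_num)
    have hcb : ∀ n, |c n| ≤ 1 := by
      intro n
      rw [hc_def]; dsimp only; split
      · rw [abs_of_nonneg (hprod0 n)]; exact hprod1 n
      · norm_num
    have hcsum : ∀ x : ℕ, ∑ n ∈ Finset.Icc 0 x, c n
        = ∑ n ∈ Finset.Icc 2 x, ∏ h ∈ T, primeInd ((n:ℤ) + h) := by
      intro x
      rw [hc_def, ← hfilter x, Finset.sum_filter]
    have hHL' : ∀ x : ℕ, 3 ≤ x →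
        |(∑ n ∈ Finset.Icc 0 x, c n) - singSeries T * Jf T.card x| ≤
          C₀ * (x:ℝ)^((1:ℝ)/2+ε) := by
      intro x hx
      rw [hcsum x]
      simpa only [Jf, gfun] using hC₀ x hx
    obtain ⟨C, hCpos, hC⟩ := keyStep c (by simp [hc_def]) (by simp [hc_def]) hcb
      (singSeries T) T.card ε hε C₀ hC₀pos.le hHL' ((H \ T).card)
    refine ⟨C, hCpos, fun x hx => ?_⟩
    have hcard : T.card + (H \ T).card = H.card := by
      rw [add_comm]; exact Finset.card_sdiff_add_card_eq_card hTH
    have h1 := hC x hx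
    rw [hcard] at h1
    have hcsum2 : ∑ n ∈ Finset.Icc 0 x, c n * ffn ((H\T).card) n
        = ∑ n ∈ Finset.Icc 2 x, (∏ h ∈ T, primeInd ((n:ℤ)+h)) * ffn ((H\T).card) n := by
      rw [hc_def]
      simp only [ite_mul, zero_mul]
      rw [← hfilter x, Finset.sum_filter]
    have hsum2 : ∑ n ∈ Finset.Icc 2 x, (∏ h ∈ T, primeInd ((n:ℤ) + h))
          * (-(1 / Real.log n)) ^ (H \ T).card
        = (-1:ℝ) ^ (H \ T).card * ∑ n ∈ Finset.Icc 0 x, c n * ffn ((H\T).card) n := by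
      rw [hcsum2, Finset.mul_sum]
      refine Finset.sum_congr rfl (fun n _ => ?_)
      rw [neg_pow, ffn]
      ring
    rw [hsum2]
    have : (-1:ℝ) ^ (H \ T).card * (∑ n ∈ Finset.Icc 0 x, c n * ffn ((H\T).card) n)
        - (-1:ℝ) ^ (H \ T).card * singSeries T * Jf H.card x
        = (-1:ℝ) ^ (H \ T).card
          * ((∑ n ∈ Finset.Icc 0 x, c n * ffn ((H\T).card) n)
              - singSeries T * Jf H.card x) := by ring
    rw [this, abs_mul, abs_pow, abs_neg, abs_one, one_pow, one_mul]
    exact h1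
  set Cfun : Finset ℤ → ℝ := fun T => if h : T ⊆ H then (hT T h).choose else 1 with hCfun_def
  have hCfun_pos : ∀ T, 0 < Cfun T := by
    intro T
    rw [hCfun_def]; dsimp only; split
    · exact (hT T ‹_›).choose_spec.1
    · norm_num
  refine ⟨∑ T ∈ H.powerset, Cfun T, Finset.sum_pos (fun T _ => hCfun_pos T)
    ⟨∅, Finset.empty_mem_powerset H⟩, ?_⟩
  intro x hx
  have hexp : ∑ n ∈ Finset.Icc 2 x, ∏ h ∈ H, (primeInd ((n:ℤ) + h) - 1 / Real.log n)
      = ∑ T ∈ H.powerset, ∑ n ∈ Finset.Icc 2 x,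
          (∏ h ∈ T, primeInd ((n:ℤ) + h)) * (-(1 / Real.log n)) ^ (H \ T).card := by
    rw [← Finset.sum_comm]
    refine Finset.sum_congr rfl (fun n _ => ?_)
    have := Finset.prod_add (fun h : ℤ => primeInd ((n:ℤ) + h))
      (fun _ : ℤ => -(1 / Real.log (n:ℝ))) H
    simp only [Finset.prod_const] at this
    rw [← this]
    exact Finset.prod_congr rfl (fun h _ => (sub_eq_add_neg _ _))
  rw [hexp, singSeries₀, Finset.sum_mul, ← Finset.sum_sub_distrib]
  refine le_trans (Finset.abs_sum_le_sum_abs _ _) ?_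
  rw [Finset.sum_mul]
  refine Finset.sum_le_sum (fun T hTp => ?_)
  have hTH : T ⊆ H := Finset.mem_powerset.mp hTp
  have hspec := (hT T hTH).choose_spec.2 x hx
  have hCT : Cfun T = (hT T hTH).choose := by rw [hCfun_def]; dsimp only; rw [dif_pos hTH]
  rw [hCT]
  simpa only [Jf, gfun, mul_assoc] using hspec
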